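/- Let d ≥ 1, T > 0, and let p, q > 2 satisfy d/p + 2/q < 1. Let f_n, f : [0,T] × ℝ^d → ℝ^d be Borel measurable functions with finite mixed norms such that ‖f_n − f‖_{L^q_p} → 0 as n → ∞. Then ∫_0^T (2πs)^{−d/2} ∫_{ℝ^d} |f_n(s,z) − f(s,z)|^2 e^{−|z|^2/(2s)} dz ds → 0 as n → ∞. -/

import Mathlib

open MeasureTheory ProbabilityTheory Filter
open scoped ENNReal NNReal Topology

noncomputable section

/-- `Euc d` is `ℝ^d` with the Euclidean norm. -/
abbrev Euc (d : ℕ) := EuclideanSpace ℝ (Fin d)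

/-- `B` is a `d`-dimensional Brownian motion on `[0,T]` with respect to `μ`:
continuous paths, `B 0 = 0`, and for any monotone family of times in `[0,T]` the
coordinates of the increments are independent, each increment coordinate being
a centered Gaussian of variance `t - s`. -/
def IsBrownianMotion {Ω : Type*} [MeasurableSpace Ω] (μ : Measure Ω) (d : ℕ) (T : ℝ)
    (B : ℝ → Ω → Euc d) : Prop :=
  (∀ ω, ContinuousOn (fun t => B t ω) (Set.Icc 0 T)) ∧
  (∀ ω, B 0 ω = 0) ∧
  (∀ t, Measurable (B t)) ∧
  (∀ (n : ℕ) (t : Fin (n + 1) → ℝ), Monotone t → (∀ i, t i ∈ Set.Icc (0 : ℝ) T) →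
    iIndepFun
      (fun p : Fin n × Fin d => fun ω =>
        (B (t p.1.succ) ω - B (t p.1.castSucc) ω) p.2) μ) ∧
  (∀ s t : ℝ, 0 ≤ s → s ≤ t → t ≤ T → ∀ i : Fin d,
    μ.map (fun ω => (B t ω - B s ω) i) = gaussianReal 0 (Real.toNNReal (t - s)))

/-- The mixed norm `‖f‖_{L^q_p}` (as an extended nonnegative real). -/
def mixedNorm (d : ℕ) (T p q : ℝ) (f : ℝ → Euc d → Euc d) : ℝ≥0∞ :=
  (∫⁻ t in Set.Ioc (0 : ℝ) T,
      (∫⁻ x : Euc d, ENNReal.ofReal (‖f t x‖ ^ p)) ^ (q / p)) ^ (1 / q)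

/-- The `μ`-augmented natural filtration of `B` at time `t`. -/
def augFiltration {Ω : Type*} [MeasurableSpace Ω] (μ : Measure Ω) {d : ℕ}
    (B : ℝ → Ω → Euc d) (t : ℝ) : MeasurableSpace Ω :=
  (⨆ s ∈ Set.Icc (0 : ℝ) t, MeasurableSpace.comap (B s) inferInstance) ⊔
    MeasurableSpace.generateFrom {N : Set Ω | μ N = 0}

/-- `X` is a strong solution of `dX_t = b(t, X_t) dt + dB_t`, `X_0 = x`, on `[0,T]`:
a continuous process, adapted to the `μ`-augmented natural filtration of `B`, such that
a.s. `∫_0^T |b(s,X_s)| ds < ∞` and `X_t = x + ∫_0^t b(s,X_s) ds + B_t` for all `t ∈ [0,T]`. -/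
def IsStrongSolution {Ω : Type*} [MeasurableSpace Ω] (μ : Measure Ω) {d : ℕ} (T : ℝ)
    (B : ℝ → Ω → Euc d) (b : ℝ → Euc d → Euc d) (x : Euc d) (X : ℝ → Ω → Euc d) : Prop :=
  (∀ ω, ContinuousOn (fun t => X t ω) (Set.Icc 0 T)) ∧
  (∀ t ∈ Set.Icc (0 : ℝ) T, Measurable[augFiltration μ B t] (X t)) ∧
  (∀ᵐ ω ∂μ, IntegrableOn (fun s => b s (X s ω)) (Set.Icc 0 T) ∧
    ∀ t ∈ Set.Icc (0 : ℝ) T,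
      X t ω = x + (∫ s in Set.Icc (0 : ℝ) t, b s (X s ω)) + B t ω)

lemma gauss_lintegral (d : ℕ) {b : ℝ} (hb : 0 < b) :
    ∫⁻ z : Euc d, ENNReal.ofReal (Real.exp (-(b * ‖z‖ ^ 2))) =
      ENNReal.ofReal ((Real.pi / b) ^ ((d : ℝ) / 2)) := by
  have hint : Integrable (fun z : Euc d => Real.exp (-(b * ‖z‖ ^ 2))) := by
    have h1 := GaussianFourier.integrable_cexp_neg_mul_sq_norm_add (V := Euc d)
      (b := (b : ℂ)) (by simpa using hb) 0 0
    have h2 := h1.norm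
    simp only [mul_zero, add_zero, Complex.norm_exp] at h2
    simp only [Complex.neg_re, Complex.mul_re, Complex.ofReal_re, Complex.ofReal_im,
      zero_mul, sub_zero] at h2
    norm_cast at h2
    simpa [neg_mul] using h2
  rw [← ofReal_integral_eq_lintegral_ofReal hint
    (Filter.Eventually.of_forall fun x => (Real.exp_pos _).le)]
  congr 1
  have h3 := GaussianFourier.integral_rexp_neg_mul_sq_norm (V := Euc d) hb
  simpa [neg_mul, finrank_euclideanSpace_fin] using h3

/-- The constant in the spatial Hölder bound. -/
def Cp (d : ℕ) (p : ℝ) : ℝ :=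
  (2 * Real.pi) ^ (-(d : ℝ) / p) * (p / (p - 2)) ^ (-(d : ℝ) / (2 * (p / (p - 2))))

lemma Cp_nonneg (d : ℕ) {p : ℝ} (hp : 2 < p) : 0 ≤ Cp d p := by
  unfold Cp
  have h1 : (0:ℝ) < p / (p - 2) := by
    apply div_pos <;> linarith
  have := Real.pi_pos
  positivity

lemma alg (d : ℕ) {p s : ℝ} (hp : 2 < p) (hs : 0 < s) :
    (((2 * Real.pi * s) ^ (-(d : ℝ) / 2)) ^ (p / (p - 2)) *
        (Real.pi / ((p / (p - 2)) / (2 * s))) ^ ((d : ℝ) / 2)) ^ (1 / (p / (p - 2)))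
      = Cp d p * s ^ (-(d : ℝ) / p) := by
  have hπ := Real.pi_pos
  set r : ℝ := p / (p - 2) with hr_def
  have hp2 : (0 : ℝ) < p - 2 := by linarith
  have hp0 : (0 : ℝ) < p := by linarith
  have hr0 : 0 < r := by positivity
  have hu : (0 : ℝ) < 2 * Real.pi * s := by positivity
  have h1 : Real.pi / (r / (2 * s)) = (2 * Real.pi * s) / r := by
    field_simp
  rw [h1, ← Real.rpow_mul hu.le, Real.div_rpow hu.le hr0.le, ← mul_div_assoc,
    ← Real.rpow_add hu, Real.div_rpow (Real.rpow_nonneg hu.le _) (Real.rpow_nonneg hr0.le _),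
    ← Real.rpow_mul hu.le, ← Real.rpow_mul hr0.le]
  have he : (-(d : ℝ) / 2 * r + (d : ℝ) / 2) * (1 / r) = -(d : ℝ) / p := by
    rw [hr_def]
    field_simp
    ring
  have he2 : (d : ℝ) / 2 * (1 / r) = -(-(d : ℝ) / (2 * r)) := by ring
  rw [he, he2, Real.rpow_neg hr0.le, div_inv_eq_mul,
    Real.mul_rpow (by positivity) hs.le]
  unfold Cp
  rw [← hr_def]
  ring

lemma inner_holder (d : ℕ) {p : ℝ} (hp : 2 < p) {s : ℝ} (hs : 0 < s)
    (g : Euc d → Euc d) (hg : Measurable g) :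
    (∫⁻ z : Euc d, ENNReal.ofReal
        ((2 * Real.pi * s) ^ (-(d : ℝ) / 2) * ‖g z‖ ^ 2 * Real.exp (-‖z‖ ^ 2 / (2 * s))))
      ≤ ENNReal.ofReal (Cp d p) * ENNReal.ofReal (s ^ (-(d : ℝ) / p)) *
        (∫⁻ z : Euc d, ENNReal.ofReal (‖g z‖ ^ p)) ^ (2 / p) := by
  have hπ := Real.pi_pos
  set r : ℝ := p / (p - 2) with hr_def
  have hp0 : (0 : ℝ) < p := by linarith
  have hp2 : (0 : ℝ) < p - 2 := by linarith
  have hr0 : 0 < r := by positivity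
  have hu : (0 : ℝ) < 2 * Real.pi * s := by positivity
  have hconj : (p / 2).HolderConjugate r := by
    rw [Real.holderConjugate_iff]
    constructor
    · linarith [hp]
    · rw [hr_def]
      field_simp
      ring
  set A : ℝ := (2 * Real.pi * s) ^ (-(d : ℝ) / 2) with hA_def
  have hA : 0 ≤ A := Real.rpow_nonneg hu.le _
  set F : Euc d → ℝ≥0∞ := fun z => ENNReal.ofReal ‖g z‖ ^ (2 : ℝ) with hF_def
  set W : Euc d → ℝ≥0∞ := fun z =>
    ENNReal.ofReal (A * Real.exp (-‖z‖ ^ 2 / (2 * s))) with hW_def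
  have hFmeas : Measurable F := (hg.norm.ennreal_ofReal).pow measurable_const
  have hWmeas : Measurable W :=
    (((((measurable_norm.pow measurable_const).neg).div_const (2 * s)).exp).const_mul A).ennreal_ofReal
  have hsplit : ∀ z : Euc d,
      ENNReal.ofReal (A * ‖g z‖ ^ 2 * Real.exp (-‖z‖ ^ 2 / (2 * s))) = (F * W) z := by
    intro z
    have : A * ‖g z‖ ^ 2 * Real.exp (-‖z‖ ^ 2 / (2 * s))
        = ‖g z‖ ^ 2 * (A * Real.exp (-‖z‖ ^ 2 / (2 * s))) := by ring
    rw [this, ENNReal.ofReal_mul (by positivity), ENNReal.ofReal_pow (norm_nonneg _)]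
    simp only [Pi.mul_apply, hF_def, hW_def, ENNReal.rpow_two]
  calc
    (∫⁻ z : Euc d, ENNReal.ofReal (A * ‖g z‖ ^ 2 * Real.exp (-‖z‖ ^ 2 / (2 * s))))
        = ∫⁻ z : Euc d, (F * W) z := lintegral_congr hsplit
    _ ≤ (∫⁻ z : Euc d, F z ^ (p / 2)) ^ (1 / (p / 2)) * (∫⁻ z : Euc d, W z ^ r) ^ (1 / r) :=
        ENNReal.lintegral_mul_le_Lp_mul_Lq volume hconj hFmeas.aemeasurable hWmeas.aemeasurable
    _ = ENNReal.ofReal (Cp d p) * ENNReal.ofReal (s ^ (-(d : ℝ) / p)) *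
        (∫⁻ z : Euc d, ENNReal.ofReal (‖g z‖ ^ p)) ^ (2 / p) := by
      have hF2 : ∀ z : Euc d, F z ^ (p / 2) = ENNReal.ofReal (‖g z‖ ^ p) := by
        intro z
        show (ENNReal.ofReal ‖g z‖ ^ (2 : ℝ)) ^ (p / 2) = _
        rw [← ENNReal.rpow_mul, show (2:ℝ) * (p / 2) = p by ring,
          ENNReal.ofReal_rpow_of_nonneg (norm_nonneg _) hp0.le]
      have hc : 0 < r / (2 * s) := by positivity
      have hptw : ∀ z : Euc d, W z ^ r =
          ENNReal.ofReal (A ^ r) * ENNReal.ofReal (Real.exp (-(r / (2 * s) * ‖z‖ ^ 2))) := by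
        intro z
        show ENNReal.ofReal (A * Real.exp (-‖z‖ ^ 2 / (2 * s))) ^ r = _
        rw [ENNReal.ofReal_rpow_of_nonneg (by positivity) hr0.le,
          Real.mul_rpow hA (Real.exp_pos _).le, ← Real.exp_mul,
          ENNReal.ofReal_mul (Real.rpow_nonneg hA _)]
        congr 2
        ring
      have hW2 : (∫⁻ z : Euc d, W z ^ r) =
          ENNReal.ofReal (A ^ r * (Real.pi / (r / (2 * s))) ^ ((d : ℝ) / 2)) := by
        rw [lintegral_congr hptw, lintegral_const_mul' _ _ ENNReal.ofReal_ne_top,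
          gauss_lintegral d hc, ← ENNReal.ofReal_mul (Real.rpow_nonneg hA _)]
      have h1p : 1 / (p / 2) = 2 / p := one_div_div p 2
      have hX : 0 ≤ A ^ r * (Real.pi / (r / (2 * s))) ^ ((d : ℝ) / 2) :=
        mul_nonneg (Real.rpow_nonneg hA _)
          (Real.rpow_nonneg (div_nonneg hπ.le (by positivity)) _)
      rw [lintegral_congr hF2, hW2, h1p,
        ENNReal.ofReal_rpow_of_nonneg hX (one_div_nonneg.mpr hr0.le), hA_def, hr_def,
        alg d hp hs, ENNReal.ofReal_mul (Cp_nonneg d hp)]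
      ring


/-- if `f_n → f` in the mixed norm `L^q_p` with `d/p + 2/q < 1`,
then the time-integrated heat-kernel integral of `|f_n - f|^2` tends to `0`. -/
theorem heat_kernel_L2_convergence
    (d : ℕ) (hd : 1 ≤ d) (T : ℝ) (hT : 0 < T)
    (p q : ℝ) (hp : 2 < p) (hq : 2 < q) (hpq : (d : ℝ) / p + 2 / q < 1)
    (fn : ℕ → ℝ → Euc d → Euc d) (f : ℝ → Euc d → Euc d)
    (hfn : ∀ n, Measurable (Function.uncurry (fn n)))
    (hf : Measurable (Function.uncurry f))
    (hfnnorm : ∀ n, mixedNorm d T p q (fn n) < ⊤)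
    (hfnorm : mixedNorm d T p q f < ⊤)
    (hconv : Filter.Tendsto
      (fun n => mixedNorm d T p q (fun t x => fn n t x - f t x)) Filter.atTop (nhds 0)) :
    Filter.Tendsto
      (fun n => ∫⁻ s in Set.Ioc (0 : ℝ) T, ∫⁻ z : Euc d,
        ENNReal.ofReal
          ((2 * Real.pi * s) ^ (-(d : ℝ) / 2) * ‖fn n s z - f s z‖ ^ 2 *
            Real.exp (-‖z‖ ^ 2 / (2 * s))))
      Filter.atTop (nhds 0) := by
  have hπ := Real.pi_pos
  have hp0 : (0 : ℝ) < p := by linarith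
  have hq0 : (0 : ℝ) < q := by linarith
  have hq2 : (0 : ℝ) < q - 2 := by linarith
  have hgmeas : ∀ n, Measurable (Function.uncurry (fun s z => fn n s z - f s z)) :=
    fun n => (hfn n).sub hf
  set φ : ℕ → ℝ → ℝ≥0∞ :=
    fun n s => (∫⁻ z : Euc d, ENNReal.ofReal (‖fn n s z - f s z‖ ^ p)) ^ (2 / p) with hφ_def
  set ψ : ℝ → ℝ≥0∞ := fun s => ENNReal.ofReal (s ^ (-(d : ℝ) / p)) with hψ_def
  have hφmeas : ∀ n, Measurable (φ n) := by
    intro n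
    apply Measurable.pow _ measurable_const
    exact Measurable.lintegral_prod_right'
      (f := fun x : ℝ × Euc d => ENNReal.ofReal (‖fn n x.1 x.2 - f x.1 x.2‖ ^ p))
      ((((hgmeas n).norm).pow measurable_const).ennreal_ofReal)
  have hψmeas : Measurable ψ := (measurable_id.pow measurable_const).ennreal_ofReal
  set q' : ℝ := q / (q - 2) with hq'_def
  have hq'0 : 0 < q' := by positivity
  have hconjq : (q / 2).HolderConjugate q' := by
    rw [Real.holderConjugate_iff]
    constructor
    · linarith
    · rw [hq'_def]
      field_simp
      ring
  set D : ℝ≥0∞ := ∫⁻ s in Set.Ioc (0 : ℝ) T, ψ s ^ q' with hD_def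
  have hψq' : ∀ s ∈ Set.Ioc (0 : ℝ) T,
      ψ s ^ q' = ENNReal.ofReal (s ^ (-(d : ℝ) / p * q')) := by
    intro s hs
    rw [hψ_def]
    rw [ENNReal.ofReal_rpow_of_nonneg (Real.rpow_nonneg hs.1.le _) hq'0.le,
      ← Real.rpow_mul hs.1.le]
  have he : (-1 : ℝ) < -(d : ℝ) / p * q' := by
    have h1 : (d : ℝ) / p * q' < (1 - 2 / q) * q' := by
      apply mul_lt_mul_of_pos_right _ hq'0
      linarith
    have h2 : (1 - 2 / q) * q' = 1 := by
      rw [hq'_def]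
      field_simp
    have : -(d : ℝ) / p * q' = -((d : ℝ) / p * q') := by ring
    rw [this]
    linarith
  have hDlt : D < ⊤ := by
    rw [hD_def, setLIntegral_congr_fun measurableSet_Ioc hψq']
    have hint : IntegrableOn (fun s : ℝ => s ^ (-(d : ℝ) / p * q')) (Set.Ioc 0 T) :=
      (intervalIntegral.intervalIntegrable_rpow' he).1
    exact Integrable.lintegral_lt_top hint
  set M : ℕ → ℝ≥0∞ := fun n => mixedNorm d T p q (fun t x => fn n t x - f t x) with hM_def
  set C : ℝ≥0∞ := ENNReal.ofReal (Cp d p) * D ^ (1 / q') with hC_def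
  have hC : C ≠ ⊤ := by
    rw [hC_def]
    exact ENNReal.mul_ne_top ENNReal.ofReal_ne_top
      (ENNReal.rpow_lt_top_of_nonneg (one_div_nonneg.mpr hq'0.le) hDlt.ne).ne
  have key : ∀ n, (∫⁻ s in Set.Ioc (0 : ℝ) T, ∫⁻ z : Euc d,
      ENNReal.ofReal
        ((2 * Real.pi * s) ^ (-(d : ℝ) / 2) * ‖fn n s z - f s z‖ ^ 2 *
          Real.exp (-‖z‖ ^ 2 / (2 * s)))) ≤ C * M n ^ 2 := by
    intro n
    have step1 : (∫⁻ s in Set.Ioc (0 : ℝ) T, ∫⁻ z : Euc d,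
        ENNReal.ofReal
          ((2 * Real.pi * s) ^ (-(d : ℝ) / 2) * ‖fn n s z - f s z‖ ^ 2 *
            Real.exp (-‖z‖ ^ 2 / (2 * s))))
        ≤ ∫⁻ s in Set.Ioc (0 : ℝ) T, ENNReal.ofReal (Cp d p) * (φ n s * ψ s) := by
      apply setLIntegral_mono (by fun_prop) (fun s hs => ?_)
      calc (∫⁻ z : Euc d, ENNReal.ofReal
          ((2 * Real.pi * s) ^ (-(d : ℝ) / 2) * ‖fn n s z - f s z‖ ^ 2 *
            Real.exp (-‖z‖ ^ 2 / (2 * s))))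
          ≤ ENNReal.ofReal (Cp d p) * ENNReal.ofReal (s ^ (-(d : ℝ) / p)) *
            (∫⁻ z : Euc d, ENNReal.ofReal (‖fn n s z - f s z‖ ^ p)) ^ (2 / p) :=
            inner_holder d hp hs.1 (fun z => fn n s z - f s z) ((hgmeas n).of_uncurry_left)
        _ = ENNReal.ofReal (Cp d p) * (φ n s * ψ s) := by
            rw [hφ_def, hψ_def]
            ring
    have step2 : (∫⁻ s in Set.Ioc (0 : ℝ) T, ENNReal.ofReal (Cp d p) * (φ n s * ψ s))
        = ENNReal.ofReal (Cp d p) * ∫⁻ s in Set.Ioc (0 : ℝ) T, (φ n * ψ) s :=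
      lintegral_const_mul' _ _ ENNReal.ofReal_ne_top
    have step3 : (∫⁻ s in Set.Ioc (0 : ℝ) T, (φ n * ψ) s)
        ≤ (∫⁻ s in Set.Ioc (0 : ℝ) T, φ n s ^ (q / 2)) ^ (1 / (q / 2)) *
          (∫⁻ s in Set.Ioc (0 : ℝ) T, ψ s ^ q') ^ (1 / q') :=
      ENNReal.lintegral_mul_le_Lp_mul_Lq _ hconjq (hφmeas n).aemeasurable hψmeas.aemeasurable
    have step4 : (∫⁻ s in Set.Ioc (0 : ℝ) T, φ n s ^ (q / 2)) ^ (1 / (q / 2)) = M n ^ 2 := by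
      have hφq : ∀ s : ℝ, φ n s ^ (q / 2)
          = (∫⁻ z : Euc d, ENNReal.ofReal (‖fn n s z - f s z‖ ^ p)) ^ (q / p) := by
        intro s
        rw [hφ_def, ← ENNReal.rpow_mul]
        congr 1
        field_simp
      rw [lintegral_congr hφq, one_div_div, hM_def]
      show _ = (mixedNorm d T p q fun t x => fn n t x - f t x) ^ 2
      rw [mixedNorm, ← ENNReal.rpow_two, ← ENNReal.rpow_mul]
      congr 1
      ring
    calc (∫⁻ s in Set.Ioc (0 : ℝ) T, ∫⁻ z : Euc d,
        ENNReal.ofReal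
          ((2 * Real.pi * s) ^ (-(d : ℝ) / 2) * ‖fn n s z - f s z‖ ^ 2 *
            Real.exp (-‖z‖ ^ 2 / (2 * s))))
        ≤ ENNReal.ofReal (Cp d p) * ∫⁻ s in Set.Ioc (0 : ℝ) T, (φ n * ψ) s := by
          rw [← step2]; exact step1
      _ ≤ ENNReal.ofReal (Cp d p) * ((∫⁻ s in Set.Ioc (0 : ℝ) T, φ n s ^ (q / 2)) ^ (1 / (q / 2)) *
          (∫⁻ s in Set.Ioc (0 : ℝ) T, ψ s ^ q') ^ (1 / q')) :=
          mul_le_mul_right step3 _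
      _ = C * M n ^ 2 := by
          rw [step4, hC_def, hD_def]
          ring
  have h2 : Filter.Tendsto (fun n => M n ^ 2) Filter.atTop (nhds 0) := by
    have := ENNReal.Tendsto.pow (n := 2) hconv
    simpa using this
  have h3 : Filter.Tendsto (fun n => C * M n ^ 2) Filter.atTop (nhds 0) := by
    have := ENNReal.Tendsto.const_mul h2 (Or.inr hC)
    simpa using this
  exact tendsto_of_tendsto_of_tendsto_of_le_of_le tendsto_const_nhds h3 (fun n => zero_le) key
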